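/- Let U = {u₁,…,uₙ}, let F = {F₁,…,F_m} be a family of subsets of U, let ℓ ≤ m, and let G be the directed acyclic graph of the Set Cover construction. Then there exist at most ℓ sets in F whose union is U if and only if G admits n + m s-t walks sharing at most ℓ arcs. -/

import Mathlib

namespace PaperRCA

def IsDiWalk {V : Type*} (A : V → V → Prop) (w : List V) : Prop :=
  w ≠ [] ∧ w.Chain' A

def walkArcs {V : Type*} (w : List V) : List (V × V) := w.zip w.tail

def SharedArc {V : Type*} {p : ℕ} (W : Fin p → List V) (a : V × V) : Prop :=
  ∃ i j : Fin p, i ≠ j ∧ ∃ r : ℕ,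
    (walkArcs (W i))[r]? = some a ∧ (walkArcs (W j))[r]? = some a

/-- Vertices of the Set Cover construction with universe size `n`, family size `m`
and budget `ℓ`: the source `s`, the sink `t`, element vertices `u i` (the `vᵢ`),
set vertices `f j` (the `wⱼ`), the internal vertices `cu i r` of the `(ℓ+1)`-chain
from `s` to `vᵢ`, and the internal vertices `cf j r` of the `(ℓ+2)`-chain from `s`
to `wⱼ`. -/
inductive SCVertex (n m ℓ : ℕ) where
  | s : SCVertex n m ℓ
  | t : SCVertex n m ℓ
  | u (i : Fin n) : SCVertex n m ℓ
  | f (j : Fin m) : SCVertex n m ℓ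
  | cu (i : Fin n) (r : Fin ℓ) : SCVertex n m ℓ
  | cf (j : Fin m) (r : Fin (ℓ + 1)) : SCVertex n m ℓ

/-- Arcs of the Set Cover construction for the family `F`. -/
def SCArc {n m ℓ : ℕ} (F : Fin m → Set (Fin n)) :
    SCVertex n m ℓ → SCVertex n m ℓ → Prop
  | .s, .cu _ r => (r : ℕ) = 0
  | .s, .u _ => ℓ = 0
  | .s, .cf _ r => (r : ℕ) = 0
  | .cu i r, .cu i' r' => i = i' ∧ (r' : ℕ) = (r : ℕ) + 1
  | .cu i r, .u i' => i = i' ∧ (r : ℕ) + 1 = ℓ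
  | .cf j r, .cf j' r' => j = j' ∧ (r' : ℕ) = (r : ℕ) + 1
  | .cf j r, .f j' => j = j' ∧ (r : ℕ) = ℓ
  | .u i, .f j => i ∈ F j
  | .f _, .t => True
  | _, _ => False

section Aux
variable {n m ℓ : ℕ}

private def toSig : SCVertex n m ℓ → Bool ⊕ (Fin n ⊕ (Fin m ⊕ ((Fin n × Fin ℓ) ⊕ (Fin m × Fin (ℓ+1)))))
  | .s => .inl true
  | .t => .inl false
  | .u i => .inr (.inl i)
  | .f j => .inr (.inr (.inl j))
  | .cu i r => .inr (.inr (.inr (.inl (i, r))))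
  | .cf j r => .inr (.inr (.inr (.inr (j, r))))

instance : Finite (SCVertex n m ℓ) := by
  apply Finite.of_injective toSig
  intro a b h
  cases a <;> cases b <;> simp_all [toSig]

theorem walkArcs_getElem? {V : Type*} (l : List V) (r : ℕ) (a : V × V) :
    (walkArcs l)[r]? = some a ↔ (l[r]? = some a.1 ∧ l[r+1]? = some a.2) := by
  obtain ⟨x, y⟩ := a
  rw [walkArcs, List.getElem?_zip_eq_some]
  simp [List.getElem?_tail]

def wu (ℓ : ℕ) {n m : ℕ} (i : Fin n) (j : Fin m) (r : ℕ) : SCVertex n m ℓ :=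
  if h0 : r = 0 then .s
  else if h : r < ℓ + 1 then .cu i ⟨r - 1, by omega⟩
  else if r = ℓ + 1 then .u i
  else if r = ℓ + 2 then .f j
  else .t

def wf (ℓ : ℕ) {n m : ℕ} (j : Fin m) (r : ℕ) : SCVertex n m ℓ :=
  if h0 : r = 0 then .s
  else if h : r < ℓ + 2 then .cf j ⟨r - 1, by omega⟩
  else if r = ℓ + 2 then .f j
  else .t

def WUlist (n m ℓ : ℕ) (i : Fin n) (j : Fin m) : List (SCVertex n m ℓ) :=
  List.ofFn (fun r : Fin (ℓ+4) => wu ℓ i j r)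

def WFlist (n m ℓ : ℕ) (j : Fin m) : List (SCVertex n m ℓ) :=
  List.ofFn (fun r : Fin (ℓ+4) => wf ℓ j r)

theorem WUlist_get (i : Fin n) (j : Fin m) (r : ℕ) (h : r < ℓ+4) :
    (WUlist n m ℓ i j)[r]? = some (wu ℓ i j r) := by
  rw [WUlist, List.getElem?_ofFn]
  rw [dif_pos h]

theorem WFlist_get (j : Fin m) (r : ℕ) (h : r < ℓ+4) :
    (WFlist n m ℓ j)[r]? = some (wf ℓ j r) := by
  rw [WFlist, List.getElem?_ofFn]
  rw [dif_pos h]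

theorem WUlist_get_none (i : Fin n) (j : Fin m) (r : ℕ) (h : ℓ+4 ≤ r) :
    (WUlist n m ℓ i j)[r]? = none := by
  rw [WUlist, List.getElem?_ofFn, dif_neg (by omega)]

theorem WFlist_get_none (j : Fin m) (r : ℕ) (h : ℓ+4 ≤ r) :
    (WFlist n m ℓ j)[r]? = none := by
  rw [WFlist, List.getElem?_ofFn, dif_neg (by omega)]

theorem wu_arc {F : Fin m → Set (Fin n)} {i : Fin n} {j : Fin m} (hij : i ∈ F j)
    (r : ℕ) (h : r ≤ ℓ+2) : SCArc F (wu ℓ i j r) (wu ℓ i j (r+1)) := by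
  unfold wu
  split_ifs <;> simp_all [SCArc] <;> omega

theorem wf_arc {F : Fin m → Set (Fin n)} {j : Fin m}
    (r : ℕ) (h : r ≤ ℓ+2) : SCArc F (wf ℓ j r) (wf ℓ j (r+1)) := by
  unfold wf
  split_ifs <;> simp_all [SCArc] <;> omega

theorem WUlist_walk {F : Fin m → Set (Fin n)} {i : Fin n} {j : Fin m} (hij : i ∈ F j) :
    IsDiWalk (SCArc F) (WUlist n m ℓ i j) ∧
      (WUlist n m ℓ i j).head? = some SCVertex.s ∧
      (WUlist n m ℓ i j).getLast? = some SCVertex.t := by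
  have hlen : (WUlist n m ℓ i j).length = ℓ + 4 := by simp [WUlist]
  refine ⟨⟨by intro hh; rw [hh] at hlen; simp at hlen, ?_⟩, ?_, ?_⟩
  · rw [List.Chain', List.isChain_iff_getElem]
    intro r hr
    rw [hlen] at hr
    have h1 := WUlist_get (ℓ := ℓ) i j r (by omega)
    have h2 := WUlist_get (ℓ := ℓ) i j (r+1) (by omega)
    rw [List.getElem?_eq_some_iff] at h1 h2
    obtain ⟨_, e1⟩ := h1; obtain ⟨_, e2⟩ := h2
    rw [e1, e2]
    exact wu_arc hij r (by omega)
  · rw [List.head?_eq_getElem?, WUlist_get i j 0 (by omega)]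
    simp [wu]
  · rw [List.getLast?_eq_getElem?, hlen]
    rw [show ℓ + 4 - 1 = ℓ + 3 by omega, WUlist_get i j (ℓ+3) (by omega)]
    simp [wu]

theorem WFlist_walk {F : Fin m → Set (Fin n)} {j : Fin m} :
    IsDiWalk (SCArc F) (WFlist n m ℓ j) ∧
      (WFlist n m ℓ j).head? = some SCVertex.s ∧
      (WFlist n m ℓ j).getLast? = some SCVertex.t := by
  have hlen : (WFlist n m ℓ j).length = ℓ + 4 := by simp [WFlist]
  refine ⟨⟨by intro hh; rw [hh] at hlen; simp at hlen, ?_⟩, ?_, ?_⟩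
  · rw [List.Chain', List.isChain_iff_getElem]
    intro r hr
    rw [hlen] at hr
    have h1 := WFlist_get (ℓ := ℓ) (n := n) j r (by omega)
    have h2 := WFlist_get (ℓ := ℓ) (n := n) j (r+1) (by omega)
    rw [List.getElem?_eq_some_iff] at h1 h2
    obtain ⟨_, e1⟩ := h1; obtain ⟨_, e2⟩ := h2
    rw [e1, e2]
    exact wf_arc r (by omega)
  · rw [List.head?_eq_getElem?, WFlist_get j 0 (by omega)]
    simp [wf]
  · rw [List.getLast?_eq_getElem?, hlen]
    rw [show ℓ + 4 - 1 = ℓ + 3 by omega, WFlist_get j (ℓ+3) (by omega)]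
    simp [wf]

theorem walkArcs_WU (i : Fin n) (j : Fin m) (r : ℕ) (h : r ≤ ℓ+2) :
    (walkArcs (WUlist n m ℓ i j))[r]? = some (wu ℓ i j r, wu ℓ i j (r+1)) := by
  rw [walkArcs_getElem?]
  exact ⟨WUlist_get i j r (by omega), WUlist_get i j (r+1) (by omega)⟩

theorem walkArcs_WF (j : Fin m) (r : ℕ) (h : r ≤ ℓ+2) :
    (walkArcs (WFlist n m ℓ j))[r]? = some (wf ℓ j r, wf ℓ j (r+1)) := by
  rw [walkArcs_getElem?]
  exact ⟨WFlist_get j r (by omega), WFlist_get j (r+1) (by omega)⟩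

theorem walkArcs_WU_inv (i : Fin n) (j : Fin m) (r : ℕ) (a : _ × _)
    (h : (walkArcs (WUlist n m ℓ i j))[r]? = some a) :
    r ≤ ℓ+2 ∧ a = (wu ℓ i j r, wu ℓ i j (r+1)) := by
  rw [walkArcs_getElem?] at h
  obtain ⟨h1, h2⟩ := h
  have hr : r ≤ ℓ + 2 := by
    by_contra hc
    rw [WUlist_get_none i j (r+1) (by omega)] at h2
    simp at h2
  rw [WUlist_get i j r (by omega)] at h1
  rw [WUlist_get i j (r+1) (by omega)] at h2
  exact ⟨hr, Prod.ext (by simpa using h1.symm) (by simpa using h2.symm)⟩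

theorem walkArcs_WF_inv (j : Fin m) (r : ℕ) (a : _ × _)
    (h : (walkArcs (WFlist n m ℓ j))[r]? = some a) :
    r ≤ ℓ+2 ∧ a = (wf ℓ j r, wf ℓ j (r+1)) := by
  rw [walkArcs_getElem?] at h
  obtain ⟨h1, h2⟩ := h
  have hr : r ≤ ℓ + 2 := by
    by_contra hc
    rw [WFlist_get_none j (r+1) (by omega)] at h2
    simp at h2
  rw [WFlist_get j r (by omega)] at h1
  rw [WFlist_get j (r+1) (by omega)] at h2
  exact ⟨hr, Prod.ext (by simpa using h1.symm) (by simpa using h2.symm)⟩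

theorem collide_uu {i i' : Fin n} {j j' : Fin m} (hne : i ≠ i') {r : ℕ} (hr : r ≤ ℓ+2)
    (h1 : wu ℓ i j r = wu ℓ i' j' r) (h2 : wu ℓ i j (r+1) = wu ℓ i' j' (r+1)) :
    r = ℓ+2 ∧ j = j' := by
  unfold wu at h1 h2
  split_ifs at h1 h2 <;> simp_all <;> omega

theorem collide_uf {i : Fin n} {j j' : Fin m} {r : ℕ} (hr : r ≤ ℓ+2)
    (h1 : wu ℓ i j r = wf ℓ j' r) (h2 : wu ℓ i j (r+1) = wf ℓ j' (r+1)) :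
    r = ℓ+2 ∧ j = j' := by
  unfold wu wf at h1 h2
  split_ifs at h1 h2 <;> simp_all <;> omega

theorem collide_ff {j j' : Fin m} (hne : j ≠ j') {r : ℕ} (hr : r ≤ ℓ+2)
    (h1 : wf ℓ (n := n) j r = wf ℓ j' r) (h2 : wf ℓ (n := n) j (r+1) = wf ℓ j' (r+1)) :
    False := by
  unfold wf at h1 h2
  split_ifs at h1 h2 <;> simp_all <;> omega

variable {F : Fin m → Set (Fin n)}

theorem walk_from_f {l : List (SCVertex n m ℓ)} (hc : l.Chain' (SCArc F)) {j : Fin m}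
    (hh : l.head? = some (.f j)) (hl : l.getLast? = some .t) :
    l = [.f j, .t] := by
  match l with
  | [] => simp at hh
  | [x] =>
    simp at hh hl; subst hh; simp at hl
  | x :: y :: l' =>
    simp only [List.head?_cons, Option.some.injEq] at hh
    subst hh
    simp only [List.Chain', List.isChain_cons_cons] at hc
    obtain ⟨hxy, hc'⟩ := hc
    have hy : y = SCVertex.t := by cases y <;> simp_all [SCArc]
    subst hy
    match l' with
    | [] => rfl
    | z :: l'' =>
      simp only [List.Chain', List.isChain_cons_cons] at hc'
      exact absurd hc'.1 (by cases z <;> simp [SCArc])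

theorem walk_from_u {l : List (SCVertex n m ℓ)} (hc : l.Chain' (SCArc F)) {i : Fin n}
    (hh : l.head? = some (.u i)) (hl : l.getLast? = some .t) :
    ∃ j : Fin m, i ∈ F j ∧ l = [.u i, .f j, .t] := by
  match l with
  | [] => simp at hh
  | [x] => simp at hh hl; subst hh; simp at hl
  | x :: y :: l' =>
    simp only [List.head?_cons, Option.some.injEq] at hh
    subst hh
    simp only [List.Chain', List.isChain_cons_cons] at hc
    obtain ⟨hxy, hc'⟩ := hc
    have hy : ∃ j : Fin m, i ∈ F j ∧ y = SCVertex.f j := by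
      cases y <;> simp_all [SCArc]
    obtain ⟨j, hij, rfl⟩ := hy
    have := walk_from_f hc' (j := j) rfl (by rwa [List.getLast?_cons_cons] at hl)
    rw [this]
    exact ⟨j, hij, rfl⟩

theorem cons_ofFn_shift {α : Type*} (g : ℕ → α) (k : ℕ) :
    g 0 :: List.ofFn (fun q : Fin k => g (↑q+1)) = List.ofFn (fun q : Fin (k+1) => g ↑q) := by
  apply List.ext_getElem?
  intro q
  match q with
  | 0 => simp [List.getElem?_ofFn, List.ofFnNthVal]
  | (q+1) =>
    simp only [List.getElem?_cons_succ, List.getElem?_ofFn, List.ofFnNthVal]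
    by_cases h : q < k
    · rw [dif_pos h, dif_pos (by omega)]
    · rw [dif_neg h, dif_neg (by omega)]

theorem ofFn_congr {α : Type*} {k k' : ℕ} (h : k = k') (g : ℕ → α) :
    List.ofFn (fun q : Fin k => g ↑q) = List.ofFn (fun q : Fin k' => g ↑q) := by
  subst h; rfl

theorem walk_from_cf {l : List (SCVertex n m ℓ)} (hc : l.Chain' (SCArc F)) {j : Fin m}
    {r : Fin (ℓ+1)} (hh : l.head? = some (.cf j r)) (hl : l.getLast? = some .t) :
    l = List.ofFn (fun q : Fin (ℓ+3-(r:ℕ)) => wf ℓ j ((r:ℕ)+1+↑q)) := by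
  induction l generalizing j r with
  | nil => simp at hh
  | cons x l' ih =>
    simp only [List.head?_cons, Option.some.injEq] at hh
    subst hh
    match l' with
    | [] => simp at hl
    | y :: l'' =>
      simp only [List.Chain', List.isChain_cons_cons] at hc
      obtain ⟨hxy, hc'⟩ := hc
      rw [List.getLast?_cons_cons] at hl
      cases y with
      | cf j' r' =>
        obtain ⟨rfl, hr'⟩ : j = j' ∧ (r':ℕ) = (r:ℕ)+1 := by simpa [SCArc] using hxy
        have ihl := ih hc' rfl hl
        have hfun : (fun q : Fin (ℓ+3-(r':ℕ)) => (wf ℓ j ((r':ℕ)+1+↑q) : SCVertex n m ℓ))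
            = (fun q : Fin (ℓ+3-(r':ℕ)) => wf ℓ j ((r:ℕ)+1+(↑q+1))) := by
          funext q; congr 1; omega
        rw [ihl, hfun, ofFn_congr (show ℓ+3-(r':ℕ) = ℓ+2-(r:ℕ) by omega)
          (fun x => (wf ℓ j ((r:ℕ)+1+(x+1)) : SCVertex n m ℓ))]
        have hhead : (SCVertex.cf j r : SCVertex n m ℓ) = wf ℓ j ((r:ℕ)+1+0) := by
          have hrlt := r.isLt
          unfold wf
          rw [dif_neg (by omega), dif_pos (by omega)]
          congr 1
        rw [hhead]
        rw [show (List.ofFn fun q : Fin (ℓ+2-(r:ℕ)) => wf ℓ j ((r:ℕ)+1+(↑q+1)))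
           = (List.ofFn fun q : Fin (ℓ+2-(r:ℕ)) => (fun x => wf ℓ j ((r:ℕ)+1+x)) (↑q+1)) from rfl]
        rw [cons_ofFn_shift (fun x => wf ℓ j ((r:ℕ)+1+x)) (ℓ+2-(r:ℕ))]
        have hrle : (r:ℕ) ≤ ℓ := Nat.lt_succ_iff.mp r.isLt
        exact ofFn_congr (show (ℓ+2-(r:ℕ))+1 = ℓ+3-(r:ℕ) by omega)
          (fun x => (wf ℓ j ((r:ℕ)+1+x) : SCVertex n m ℓ))
      | f j' =>
        obtain ⟨rfl, hr⟩ : j = j' ∧ (r:ℕ) = ℓ := by simpa [SCArc] using hxy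
        have hl2 := walk_from_f hc' (j := j) rfl hl
        rw [hl2]
        clear ih hxy hc' hl hl2
        apply List.ext_getElem?
        intro q
        rw [List.getElem?_ofFn]
        match q with
        | 0 =>
          rw [dif_pos (show 0 < ℓ+3-(r:ℕ) by omega)]
          simp only [List.getElem?_cons_zero, Option.some.injEq]
          unfold wf
          split_ifs <;> simp_all [Fin.ext_iff] <;> omega
        | 1 =>
          rw [dif_pos (show 1 < ℓ+3-(r:ℕ) by omega)]
          simp only [List.getElem?_cons_succ, List.getElem?_cons_zero, Option.some.injEq]
          unfold wf
          split_ifs <;> simp_all [Fin.ext_iff] <;> omega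
        | 2 =>
          rw [dif_pos (show 2 < ℓ+3-(r:ℕ) by omega)]
          simp only [List.getElem?_cons_succ, List.getElem?_cons_zero, Option.some.injEq]
          unfold wf
          split_ifs <;> simp_all [Fin.ext_iff] <;> omega
        | (q+3) =>
          rw [dif_neg (show ¬ (q+3 < ℓ+3-(r:ℕ)) by omega)]
          simp
      | s => exact absurd hxy (by simp [SCArc])
      | t => exact absurd hxy (by simp [SCArc])
      | u i => exact absurd hxy (by simp [SCArc])
      | cu i rr => exact absurd hxy (by simp [SCArc])

theorem walk_from_cu {l : List (SCVertex n m ℓ)} (hc : l.Chain' (SCArc F)) {i : Fin n}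
    {r : Fin ℓ} (hh : l.head? = some (.cu i r)) (hl : l.getLast? = some .t) :
    ∃ j : Fin m, i ∈ F j ∧
      l = List.ofFn (fun q : Fin (ℓ+3-(r:ℕ)) => wu ℓ i j ((r:ℕ)+1+↑q)) := by
  induction l generalizing i r with
  | nil => simp at hh
  | cons x l' ih =>
    simp only [List.head?_cons, Option.some.injEq] at hh
    subst hh
    match l' with
    | [] => simp at hl
    | y :: l'' =>
      simp only [List.Chain', List.isChain_cons_cons] at hc
      obtain ⟨hxy, hc'⟩ := hc
      rw [List.getLast?_cons_cons] at hl
      cases y with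
      | cu i' r' =>
        obtain ⟨rfl, hr'⟩ : i = i' ∧ (r':ℕ) = (r:ℕ)+1 := by simpa [SCArc] using hxy
        obtain ⟨j, hij, ihl⟩ := ih hc' rfl hl
        clear ih hxy hc' hl
        refine ⟨j, hij, ?_⟩
        have hfun : (fun q : Fin (ℓ+3-(r':ℕ)) => (wu ℓ i j ((r':ℕ)+1+↑q) : SCVertex n m ℓ))
            = (fun q : Fin (ℓ+3-(r':ℕ)) => wu ℓ i j ((r:ℕ)+1+(↑q+1))) := by
          funext q; congr 1; omega
        rw [ihl, hfun, ofFn_congr (show ℓ+3-(r':ℕ) = ℓ+2-(r:ℕ) by omega)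
          (fun x => (wu ℓ i j ((r:ℕ)+1+(x+1)) : SCVertex n m ℓ))]
        have hhead : (SCVertex.cu i r : SCVertex n m ℓ) = wu ℓ i j ((r:ℕ)+1+0) := by
          have hrlt := r.isLt
          unfold wu
          split_ifs <;> simp_all [Fin.ext_iff] <;> omega
        rw [hhead]
        rw [show (List.ofFn fun q : Fin (ℓ+2-(r:ℕ)) => wu ℓ i j ((r:ℕ)+1+(↑q+1)))
           = (List.ofFn fun q : Fin (ℓ+2-(r:ℕ)) => (fun x => wu ℓ i j ((r:ℕ)+1+x)) (↑q+1)) from rfl]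
        rw [cons_ofFn_shift (fun x => wu ℓ i j ((r:ℕ)+1+x)) (ℓ+2-(r:ℕ))]
        have hrle : (r:ℕ) < ℓ := r.isLt
        exact ofFn_congr (show (ℓ+2-(r:ℕ))+1 = ℓ+3-(r:ℕ) by omega)
          (fun x => (wu ℓ i j ((r:ℕ)+1+x) : SCVertex n m ℓ))
      | u i' =>
        obtain ⟨rfl, hr⟩ : i = i' ∧ (r:ℕ)+1 = ℓ := by simpa [SCArc] using hxy
        obtain ⟨j, hij, hl2⟩ := walk_from_u hc' rfl hl
        refine ⟨j, hij, ?_⟩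
        rw [hl2]
        clear ih hxy hc' hl hl2
        apply List.ext_getElem?
        intro q
        rw [List.getElem?_ofFn]
        match q with
        | 0 =>
          rw [dif_pos (show 0 < ℓ+3-(r:ℕ) by omega)]
          simp only [List.getElem?_cons_zero, Option.some.injEq]
          unfold wu
          split_ifs <;> simp_all [Fin.ext_iff] <;> omega
        | 1 =>
          rw [dif_pos (show 1 < ℓ+3-(r:ℕ) by omega)]
          simp only [List.getElem?_cons_succ, List.getElem?_cons_zero, Option.some.injEq]
          unfold wu
          split_ifs <;> simp_all [Fin.ext_iff] <;> omega
        | 2 =>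
          rw [dif_pos (show 2 < ℓ+3-(r:ℕ) by omega)]
          simp only [List.getElem?_cons_succ, List.getElem?_cons_zero, Option.some.injEq]
          unfold wu
          split_ifs <;> simp_all [Fin.ext_iff] <;> omega
        | 3 =>
          rw [dif_pos (show 3 < ℓ+3-(r:ℕ) by omega)]
          simp only [List.getElem?_cons_succ, List.getElem?_cons_zero, Option.some.injEq]
          unfold wu
          split_ifs <;> simp_all [Fin.ext_iff] <;> omega
        | (q+4) =>
          rw [dif_neg (show ¬ (q+4 < ℓ+3-(r:ℕ)) by omega)]
          simp
      | s => exact absurd hxy (by simp [SCArc])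
      | t => exact absurd hxy (by simp [SCArc])
      | f j' => exact absurd hxy (by simp [SCArc])
      | cf j' rr => exact absurd hxy (by simp [SCArc])

theorem walk_classify {l : List (SCVertex n m ℓ)} (hc : l.Chain' (SCArc F))
    (hh : l.head? = some .s) (hl : l.getLast? = some .t) :
    (∃ i : Fin n, ∃ j : Fin m, i ∈ F j ∧ l = WUlist n m ℓ i j) ∨
      (∃ j : Fin m, l = WFlist n m ℓ j) := by
  match l with
  | [] => simp at hh
  | [x] => simp at hh hl; subst hh; simp at hl
  | x :: y :: l'' =>
    simp only [List.head?_cons, Option.some.injEq] at hh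
    subst hh
    simp only [List.Chain', List.isChain_cons_cons] at hc
    obtain ⟨hxy, hc'⟩ := hc
    rw [List.getLast?_cons_cons] at hl
    cases y with
    | cu i r =>
      have hr0 : (r:ℕ) = 0 := by simpa [SCArc] using hxy
      obtain ⟨j, hij, hl2⟩ := walk_from_cu hc' rfl hl
      refine Or.inl ⟨i, j, hij, ?_⟩
      rw [hl2]
      clear hxy hc' hl hl2
      apply List.ext_getElem?
      intro q
      rw [WUlist]
      match q with
      | 0 =>
        rw [List.getElem?_cons_zero, List.getElem?_ofFn,
          dif_pos (show 0 < ℓ+4 by omega)]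
        simp [wu]
      | q+1 =>
        rw [List.getElem?_cons_succ, List.getElem?_ofFn, List.getElem?_ofFn]
        by_cases hq : q < ℓ+3-(r:ℕ)
        · rw [dif_pos hq, dif_pos (show q+1 < ℓ+4 by omega)]
          show some (wu ℓ i j ((r:ℕ)+1+q)) = some (wu ℓ i j (q+1))
          rw [show (r:ℕ)+1+q = q+1 by omega]
        · rw [dif_neg hq, dif_neg (show ¬ (q+1 < ℓ+4) by omega)]
    | cf j r =>
      have hr0 : (r:ℕ) = 0 := by simpa [SCArc] using hxy
      have hl2 := walk_from_cf hc' (j := j) (r := r) rfl hl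
      refine Or.inr ⟨j, ?_⟩
      rw [hl2]
      clear hxy hc' hl hl2
      apply List.ext_getElem?
      intro q
      rw [WFlist]
      match q with
      | 0 =>
        rw [List.getElem?_cons_zero, List.getElem?_ofFn,
          dif_pos (show 0 < ℓ+4 by omega)]
        simp [wf]
      | q+1 =>
        rw [List.getElem?_cons_succ, List.getElem?_ofFn, List.getElem?_ofFn]
        by_cases hq : q < ℓ+3-(r:ℕ)
        · rw [dif_pos hq, dif_pos (show q+1 < ℓ+4 by omega)]
          show some (wf ℓ j ((r:ℕ)+1+q)) = some (wf ℓ j (q+1))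
          rw [show (r:ℕ)+1+q = q+1 by omega]
        · rw [dif_neg hq, dif_neg (show ¬ (q+1 < ℓ+4) by omega)]
    | u i =>
      have hℓ0 : ℓ = 0 := by simpa [SCArc] using hxy
      obtain ⟨j, hij, hl2⟩ := walk_from_u hc' rfl hl
      refine Or.inl ⟨i, j, hij, ?_⟩
      rw [hl2]
      clear hxy hc' hl hl2
      subst hℓ0
      apply List.ext_getElem?
      intro q
      rw [WUlist]
      match q with
      | 0 =>
        rw [List.getElem?_ofFn, dif_pos (show 0 < 0+4 by omega)]
        rfl
      | 1 =>
        rw [List.getElem?_ofFn, dif_pos (show 1 < 0+4 by omega)]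
        rfl
      | 2 =>
        rw [List.getElem?_ofFn, dif_pos (show 2 < 0+4 by omega)]
        rfl
      | 3 =>
        rw [List.getElem?_ofFn, dif_pos (show 3 < 0+4 by omega)]
        rfl
      | q+4 =>
        rw [List.getElem?_ofFn, dif_neg (show ¬ (q+4 < 0+4) by omega)]
        simp
    | s => exact absurd hxy (by simp [SCArc])
    | t => exact absurd hxy (by simp [SCArc])
    | f j => exact absurd hxy (by simp [SCArc])

theorem wu_last2 (i : Fin n) (j : Fin m) : wu ℓ i j (ℓ+2) = SCVertex.f j := by
  unfold wu; split_ifs <;> first | rfl | omega | simp_all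

theorem wu_last (i : Fin n) (j : Fin m) : wu ℓ i j (ℓ+3) = SCVertex.t := by
  unfold wu; split_ifs <;> first | rfl | omega | simp_all

theorem wf_last2 (j : Fin m) : wf ℓ (n := n) j (ℓ+2) = SCVertex.f j := by
  unfold wf; split_ifs <;> first | rfl | omega | simp_all

theorem wf_last (j : Fin m) : wf ℓ (n := n) j (ℓ+3) = SCVertex.t := by
  unfold wf; split_ifs <;> first | rfl | omega | simp_all

theorem wu_indep (i : Fin n) (j j' : Fin m) (r : ℕ) (hr : r ≤ ℓ+1) :
    wu ℓ i j r = wu ℓ i j' r := by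
  unfold wu; split_ifs <;> first | rfl | omega | simp_all

theorem wu_inj2 (i : Fin n) (j : Fin m) (r r' : ℕ) (hr : r ≤ ℓ) (hr' : r' ≤ ℓ)
    (h : wu ℓ i j (r+1) = wu ℓ i j (r'+1)) : r = r' := by
  unfold wu at h; split_ifs at h <;> simp_all [Fin.ext_iff] <;> omega

theorem wf_inj2 (j : Fin m) (r r' : ℕ) (hr : r ≤ ℓ+1) (hr' : r' ≤ ℓ+1)
    (h : wf ℓ (n := n) j (r+1) = wf ℓ j (r'+1)) : r = r' := by
  unfold wf at h; split_ifs at h <;> simp_all [Fin.ext_iff] <;> omega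

end Aux

/-- There are at most `ℓ` sets in the family `F` whose union is the
universe iff the DAG of the Set Cover construction admits `n + m` `s`-`t` walks
sharing at most `ℓ` arcs. -/
theorem stmt2 (n m ℓ : ℕ) (hℓ : ℓ ≤ m) (F : Fin m → Set (Fin n)) :
    (∃ S : Finset (Fin m), S.card ≤ ℓ ∧ ∀ i : Fin n, ∃ j ∈ S, i ∈ F j) ↔
    (∃ W : Fin (n + m) → List (SCVertex n m ℓ),
      (∀ q : Fin (n + m), IsDiWalk (SCArc F) (W q) ∧
        (W q).head? = some SCVertex.s ∧ (W q).getLast? = some SCVertex.t) ∧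
      {a : SCVertex n m ℓ × SCVertex n m ℓ | SharedArc W a}.ncard ≤ ℓ) := by
  classical
  constructor
  · rintro ⟨S, hScard, hcov⟩
    choose σ hσS hσF using hcov
    set W : Fin (n + m) → List (SCVertex n m ℓ) := fun q =>
      if h : (q : ℕ) < n then WUlist n m ℓ ⟨q, h⟩ (σ ⟨q, h⟩)
      else WFlist n m ℓ ⟨(q : ℕ) - n, by have := q.isLt; omega⟩ with hW
    refine ⟨W, ?_, ?_⟩
    · intro q
      by_cases h : (q : ℕ) < n
      · rw [hW]; simp only [dif_pos h]; exact WUlist_walk (hσF _)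
      · rw [hW]; simp only [dif_neg h]; exact WFlist_walk
    · have hsub : {a : SCVertex n m ℓ × SCVertex n m ℓ | SharedArc W a} ⊆
          (fun j : Fin m => ((SCVertex.f j : SCVertex n m ℓ), (SCVertex.t : SCVertex n m ℓ))) '' ↑S := by
        rintro a ⟨q1, q2, hne, r, h1, h2⟩
        rw [hW] at h1 h2
        simp only at h1 h2
        by_cases hq1 : (q1 : ℕ) < n <;> by_cases hq2 : (q2 : ℕ) < n
        · rw [dif_pos hq1] at h1; rw [dif_pos hq2] at h2
          obtain ⟨hr, ha1⟩ := walkArcs_WU_inv _ _ _ _ h1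
          obtain ⟨-, ha2⟩ := walkArcs_WU_inv _ _ _ _ h2
          rw [ha1] at ha2
          obtain ⟨e1, e2⟩ := Prod.mk.injEq .. ▸ ha2
          have hnei : (⟨(q1:ℕ), hq1⟩ : Fin n) ≠ ⟨(q2:ℕ), hq2⟩ := by
            intro h; exact hne (Fin.ext (by simpa [Fin.ext_iff] using h))
          obtain ⟨hrl, -⟩ := collide_uu hnei hr e1 e2
          subst hrl
          refine ⟨σ ⟨(q1:ℕ), hq1⟩, hσS _, ?_⟩
          rw [ha1, wu_last2]
          rw [show ℓ+2+1 = ℓ+3 from rfl, wu_last]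
        · rw [dif_pos hq1] at h1; rw [dif_neg hq2] at h2
          obtain ⟨hr, ha1⟩ := walkArcs_WU_inv _ _ _ _ h1
          obtain ⟨-, ha2⟩ := walkArcs_WF_inv _ _ _ h2
          rw [ha1] at ha2
          obtain ⟨e1, e2⟩ := Prod.mk.injEq .. ▸ ha2
          obtain ⟨hrl, -⟩ := collide_uf hr e1 e2
          subst hrl
          refine ⟨σ ⟨(q1:ℕ), hq1⟩, hσS _, ?_⟩
          rw [ha1, wu_last2]
          rw [show ℓ+2+1 = ℓ+3 from rfl, wu_last]
        · rw [dif_neg hq1] at h1; rw [dif_pos hq2] at h2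
          obtain ⟨hr, ha1⟩ := walkArcs_WF_inv _ _ _ h1
          obtain ⟨-, ha2⟩ := walkArcs_WU_inv _ _ _ _ h2
          rw [ha1] at ha2
          obtain ⟨e1, e2⟩ := Prod.mk.injEq .. ▸ ha2
          obtain ⟨hrl, hj⟩ := collide_uf hr e1.symm e2.symm
          subst hrl
          refine ⟨σ ⟨(q2:ℕ), hq2⟩, hσS _, ?_⟩
          rw [ha1, hj, wf_last2]
          rw [show ℓ+2+1 = ℓ+3 from rfl, wf_last]
        · rw [dif_neg hq1] at h1; rw [dif_neg hq2] at h2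
          obtain ⟨hr, ha1⟩ := walkArcs_WF_inv _ _ _ h1
          obtain ⟨-, ha2⟩ := walkArcs_WF_inv _ _ _ h2
          rw [ha1] at ha2
          obtain ⟨e1, e2⟩ := Prod.mk.injEq .. ▸ ha2
          have hnej : (⟨(q1:ℕ)-n, by have := q1.isLt; omega⟩ : Fin m)
              ≠ ⟨(q2:ℕ)-n, by have := q2.isLt; omega⟩ := by
            intro h
            exact hne (Fin.ext (by simp only [Fin.mk.injEq] at h; omega))
          exact absurd (collide_ff hnej hr e1 e2) (fun h => h)
      calc {a : SCVertex n m ℓ × SCVertex n m ℓ | SharedArc W a}.ncard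
          ≤ ((fun j : Fin m => ((SCVertex.f j : SCVertex n m ℓ), (SCVertex.t : SCVertex n m ℓ))) '' ↑S).ncard :=
            Set.ncard_le_ncard hsub (Set.toFinite _)
        _ ≤ (↑S : Set (Fin m)).ncard := Set.ncard_image_le (Set.toFinite _)
        _ = S.card := Set.ncard_coe_finset S
        _ ≤ ℓ := hScard
  · rintro ⟨W, hWq, hcard⟩
    have hclass : ∀ q, ∃ p : Fin n ⊕ Fin m,
        (∃ i j, p = .inl i ∧ i ∈ F j ∧ W q = WUlist n m ℓ i j) ∨
        (∃ j, p = .inr j ∧ W q = WFlist n m ℓ j) := by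
      intro q
      obtain ⟨⟨hne, hch⟩, hh, hl⟩ := hWq q
      rcases walk_classify hch hh hl with ⟨i, j, hij, he⟩ | ⟨j, he⟩
      · exact ⟨.inl i, Or.inl ⟨i, j, rfl, hij, he⟩⟩
      · exact ⟨.inr j, Or.inr ⟨j, rfl, he⟩⟩
    choose κ hκ using hclass
    have hinj : Function.Injective κ := by
      intro q1 q2 hk
      by_contra hne
      rcases hκ q1 with ⟨i1, j1, hk1, hij1, he1⟩ | ⟨j1, hk1, he1⟩ <;>
        rcases hκ q2 with ⟨i2, j2, hk2, hij2, he2⟩ | ⟨j2, hk2, he2⟩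
      · rw [hk1, hk2] at hk
        obtain rfl : i1 = i2 := by simpa using hk
        have hsh : ∀ r : ℕ, r ≤ ℓ → SharedArc W (wu ℓ i1 j1 r, wu ℓ i1 j1 (r+1)) := by
          intro r hr
          refine ⟨q1, q2, hne, r, ?_, ?_⟩
          · rw [he1]; exact walkArcs_WU _ _ r (by omega)
          · rw [he2, walkArcs_WU _ _ r (by omega),
              wu_indep i1 j2 j1 r (by omega), wu_indep i1 j2 j1 (r+1) (by omega)]
        have hbig : ℓ + 1 ≤ {a : SCVertex n m ℓ × SCVertex n m ℓ | SharedArc W a}.ncard := by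
          have hT : ((Finset.range (ℓ+1)).image
              (fun r => (wu ℓ i1 j1 r, wu ℓ i1 j1 (r+1)))).card = ℓ+1 := by
            rw [Finset.card_image_of_injOn, Finset.card_range]
            intro r hr r' hr' h
            simp only [Finset.mem_coe, Finset.mem_range] at hr hr'
            have := congrArg Prod.snd h
            exact wu_inj2 i1 j1 r r' (by omega) (by omega) this
          calc ℓ + 1 = ((Finset.range (ℓ+1)).image
                (fun r => (wu ℓ i1 j1 r, wu ℓ i1 j1 (r+1)))).card := hT.symm
            _ = (↑((Finset.range (ℓ+1)).image
                (fun r => (wu ℓ i1 j1 r, wu ℓ i1 j1 (r+1)))) :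
                  Set (SCVertex n m ℓ × SCVertex n m ℓ)).ncard :=
              (Set.ncard_coe_finset _).symm
            _ ≤ _ := by
              refine Set.ncard_le_ncard ?_ (Set.toFinite _)
              intro a ha
              simp only [Finset.coe_image, Finset.coe_range, Set.mem_image,
                Set.mem_Iio] at ha
              obtain ⟨r, hr, rfl⟩ := ha
              exact hsh r (by omega)
        omega
      · rw [hk1, hk2] at hk; exact Sum.inl_ne_inr hk
      · rw [hk1, hk2] at hk; exact Sum.inr_ne_inl hk
      · rw [hk1, hk2] at hk
        obtain rfl : j1 = j2 := by simpa using hk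
        have hsh : ∀ r : ℕ, r ≤ ℓ+1 → SharedArc W (wf ℓ j1 r, wf ℓ j1 (r+1)) := by
          intro r hr
          refine ⟨q1, q2, hne, r, ?_, ?_⟩
          · rw [he1]; exact walkArcs_WF _ r (by omega)
          · rw [he2]; exact walkArcs_WF _ r (by omega)
        have hbig : ℓ + 2 ≤ {a : SCVertex n m ℓ × SCVertex n m ℓ | SharedArc W a}.ncard := by
          have hT : ((Finset.range (ℓ+2)).image
              (fun r => ((wf ℓ j1 r : SCVertex n m ℓ), (wf ℓ j1 (r+1) : SCVertex n m ℓ)))).card = ℓ+2 := by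
            rw [Finset.card_image_of_injOn, Finset.card_range]
            intro r hr r' hr' h
            simp only [Finset.mem_coe, Finset.mem_range] at hr hr'
            have := congrArg Prod.snd h
            exact wf_inj2 j1 r r' (by omega) (by omega) this
          calc ℓ + 2 = ((Finset.range (ℓ+2)).image
                (fun r => ((wf ℓ j1 r : SCVertex n m ℓ), (wf ℓ j1 (r+1) : SCVertex n m ℓ)))).card := hT.symm
            _ = (↑((Finset.range (ℓ+2)).image
                (fun r => ((wf ℓ j1 r : SCVertex n m ℓ), (wf ℓ j1 (r+1) : SCVertex n m ℓ)))) :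
                  Set (SCVertex n m ℓ × SCVertex n m ℓ)).ncard :=
              (Set.ncard_coe_finset _).symm
            _ ≤ _ := by
              refine Set.ncard_le_ncard ?_ (Set.toFinite _)
              intro a ha
              simp only [Finset.coe_image, Finset.coe_range, Set.mem_image,
                Set.mem_Iio] at ha
              obtain ⟨r, hr, rfl⟩ := ha
              exact hsh r (by omega)
        omega
    have hbij : Function.Bijective κ := by
      rw [Fintype.bijective_iff_injective_and_card]
      exact ⟨hinj, by simp⟩
    have hcov : ∀ i : Fin n, ∃ j : Fin m, i ∈ F j ∧
        SharedArc W ((SCVertex.f j : SCVertex n m ℓ), SCVertex.t) := by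
      intro i
      obtain ⟨q, hq⟩ := hbij.2 (Sum.inl i)
      rcases hκ q with ⟨i', j, hk, hij, he⟩ | ⟨j, hk, he⟩
      · rw [hq] at hk
        obtain rfl : i = i' := by simpa using hk
        obtain ⟨q', hq'⟩ := hbij.2 (Sum.inr j)
        rcases hκ q' with ⟨i'', j'', hk', hij', he'⟩ | ⟨j'', hk', he'⟩
        · rw [hq'] at hk'; exact (Sum.inr_ne_inl hk').elim
        · rw [hq'] at hk'
          obtain rfl : j = j'' := by simpa using hk'
          have hneq : q ≠ q' := by
            intro h; rw [h, hq'] at hq; exact Sum.inr_ne_inl hq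
          refine ⟨j, hij, q, q', hneq, ℓ+2, ?_, ?_⟩
          · rw [he, walkArcs_WU _ _ (ℓ+2) le_rfl, wu_last2,
              show ℓ+2+1 = ℓ+3 from rfl, wu_last]
          · rw [he', walkArcs_WF _ (ℓ+2) le_rfl, wf_last2,
              show ℓ+2+1 = ℓ+3 from rfl, wf_last]
      · rw [hq] at hk; exact (Sum.inl_ne_inr hk).elim
    choose σ hσF hσsh using hcov
    refine ⟨Finset.image σ Finset.univ, ?_,
      fun i => ⟨σ i, Finset.mem_image_of_mem _ (Finset.mem_univ i), hσF i⟩⟩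
    have hinj2 : Function.Injective
        (fun j : Fin m => ((SCVertex.f j : SCVertex n m ℓ), (SCVertex.t : SCVertex n m ℓ))) := by
      intro a b h; simpa using h
    calc (Finset.image σ Finset.univ).card
        = ((Finset.image σ Finset.univ).image
            (fun j : Fin m => ((SCVertex.f j : SCVertex n m ℓ), (SCVertex.t : SCVertex n m ℓ)))).card :=
          (Finset.card_image_of_injective _ hinj2).symm
      _ = (↑((Finset.image σ Finset.univ).image
            (fun j : Fin m => ((SCVertex.f j : SCVertex n m ℓ), (SCVertex.t : SCVertex n m ℓ)))) :
              Set (SCVertex n m ℓ × SCVertex n m ℓ)).ncard :=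
          (Set.ncard_coe_finset _).symm
      _ ≤ {a : SCVertex n m ℓ × SCVertex n m ℓ | SharedArc W a}.ncard := by
          refine Set.ncard_le_ncard ?_ (Set.toFinite _)
          intro a ha
          simp only [Finset.coe_image, Finset.coe_univ, Set.image_univ,
            Set.mem_image, Set.mem_range] at ha
          obtain ⟨j, ⟨i, rfl⟩, rfl⟩ := ha
          exact hσsh i
      _ ≤ ℓ := hcard


end PaperRCA
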